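/- Let ξ ∈ K[G] be nonzero. Then the function f_ξ is well defined (the minimum defining f_ξ(a) exists for every a ∈ ℤ), f_ξ(a+1) ≥ f_ξ(a) for all a ∈ ℤ, and for every a ∈ ℤ there exists z ∈ L with v_L(z) = a and v_L(ξ(z)) = f_ξ(a). -/

import Mathlib

open scoped TensorProduct

noncomputable section

/-- The natural action of the group algebra `K[G]`, `G = Gal(L/K)`, on `L`. -/
def actK (K L : Type) [Field K] [Field L] [Algebra K L]
    (ξ : MonoidAlgebra K (L ≃ₐ[K] L)) (y : L) : L :=
  ξ.coeff.sum fun σ c => algebraMap K L c * σ y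

/-- `vL` is a normalized (additive, surjective onto `ℤ`) valuation on the field `L`. -/
def IsNormValuation {L : Type} [Field L] (vL : L → WithTop ℤ) : Prop :=
  vL 0 = ⊤ ∧ (∀ x : L, x ≠ 0 → vL x ≠ ⊤) ∧
    (∀ x y : L, vL (x * y) = vL x + vL y) ∧
    (∀ x y : L, min (vL x) (vL y) ≤ vL (x + y)) ∧
    (∀ m : ℤ, ∃ x : L, vL x = (m : WithTop ℤ))

/-- Bundled context: `vL` is the normalized valuation of `L`, Galois-invariant;
`K` embeds with value group `p^n ℤ` (so `L/K` is totally ramified of degree `p^n`);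
`L` is complete; and the residue field (of `K`, hence of `L`) is perfect of
characteristic `p`. -/
def LocalCtx (p n : ℕ) (K L : Type) [Field K] [Field L] [Algebra K L]
    (vL : L → WithTop ℤ) : Prop :=
  IsNormValuation vL ∧
  (∀ (σ : L ≃ₐ[K] L) (x : L), vL (σ x) = vL x) ∧
  (∀ k : K, k ≠ 0 → ∃ m : ℤ, vL (algebraMap K L k) = ((p ^ n * m : ℤ) : WithTop ℤ)) ∧
  (∀ f : ℕ → L,
    (∀ m : ℤ, ∃ N : ℕ, ∀ j k : ℕ, N ≤ j → N ≤ k → (m : WithTop ℤ) < vL (f j - f k)) →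
    ∃ x : L, ∀ m : ℤ, ∃ N : ℕ, ∀ k : ℕ, N ≤ k → (m : WithTop ℤ) < vL (f k - x)) ∧
  (∀ x : K, (0 : WithTop ℤ) ≤ vL (algebraMap K L x) →
    ∃ y : K, (0 : WithTop ℤ) < vL (algebraMap K L (x - y ^ p)))

/-- The `i`-th digit of `s` in base `p`. -/
def digit (p s i : ℕ) : ℕ := s / p ^ i % p

/-- `r : ℤ → S_{p^n}`, the least nonnegative residue modulo `p^n`. -/
def rres (p n : ℕ) (t : ℤ) : ℕ := (t % ((p : ℤ) ^ n)).toNat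

/-- `𝔟(s) = s_(0) p^0 b_n + s_(1) p^1 b_{n-1} + ⋯ + s_(n-1) p^{n-1} b_1`. -/
def bfrak (p n : ℕ) (b : ℕ → ℤ) (s : ℕ) : ℤ :=
  ∑ i ∈ Finset.range n, (digit p s i : ℤ) * (p : ℤ) ^ i * b (n - i)

/-- `𝔞 : S_{p^n} → S_{p^n}` is the inverse of the bijection `r ∘ (-𝔟)`. -/
def IsAfrak (p n : ℕ) (b : ℕ → ℤ) (afrak : ℕ → ℕ) : Prop :=
  ∀ s : ℕ, s < p ^ n → afrak s < p ^ n ∧ rres p n (-(bfrak p n b (afrak s))) = s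

/-- `b 1 ≤ ⋯ ≤ b n` are the lower ramification breaks of `L/K`, counted with
multiplicity: for every `m`, the lower ramification group `G_m` has order
`p ^ #{i ∈ [1,n] : b i ≥ m}`. -/
def IsRamBreaks (p n : ℕ) (K L : Type) [Field K] [Field L] [Algebra K L]
    (vL : L → WithTop ℤ) (b : ℕ → ℤ) : Prop :=
  (∀ i j : ℕ, 1 ≤ i → i ≤ j → j ≤ n → b i ≤ b j) ∧
  ∀ m : ℤ, Nat.card {σ : L ≃ₐ[K] L // ∀ x : L, (0 : WithTop ℤ) ≤ vL x →
      ((m + 1 : ℤ) : WithTop ℤ) ≤ vL (σ x - x)} =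
    p ^ ((Finset.Icc 1 n).filter fun i => m ≤ b i).card

/-- `({Ψ_i}, {λ_t})` is a Galois scaffold for `L/K` with precision `c`. -/
def IsGaloisScaffold (p n : ℕ) (K L : Type) [Field K] [Field L] [Algebra K L]
    (vL : L → WithTop ℤ) (b : ℕ → ℤ) (afrak : ℕ → ℕ)
    (Ψ : ℕ → MonoidAlgebra K (L ≃ₐ[K] L)) (lam : ℤ → L) (c : ℕ) : Prop :=
  (∀ t : ℤ, vL (lam t) = (t : WithTop ℤ)) ∧
  (∀ t₁ t₂ : ℤ, ((p : ℤ) ^ n) ∣ (t₁ - t₂) → ∃ k : K, lam t₁ = algebraMap K L k * lam t₂) ∧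
  (∀ i : ℕ, 1 ≤ i → i ≤ n → actK K L (Ψ i) 1 = 0) ∧
  (∀ i : ℕ, 1 ≤ i → i ≤ n → ∀ t : ℤ,
    (1 ≤ digit p (afrak (rres p n t)) (n - i) →
      ∃ u : K, vL (algebraMap K L u) = 0 ∧
        ((t + (p : ℤ) ^ (n - i) * b i + c : ℤ) : WithTop ℤ) ≤
          vL (actK K L (Ψ i) (lam t) -
            algebraMap K L u * lam (t + (p : ℤ) ^ (n - i) * b i))) ∧
    (digit p (afrak (rres p n t)) (n - i) = 0 →
      ((t + (p : ℤ) ^ (n - i) * b i + c : ℤ) : WithTop ℤ) ≤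
        vL (actK K L (Ψ i) (lam t))))

/-- The map `a ⊗ b ↦ a · σ(b)`. -/
def phiAux (K L : Type) [Field K] [Field L] [Algebra K L] (σ : L ≃ₐ[K] L) :
    L ⊗[K] L →ₗ[K] L :=
  TensorProduct.lift ((LinearMap.mul K L).compl₂ σ.toLinearMap)

/-- The map `φ : L ⊗_K L → L[G]`, `φ(a ⊗ b) = Σ_{σ ∈ G} a σ(b) σ`, with `L[G]`
realized as finitely supported functions `G →₀ L`. -/
def phi (K L : Type) [Field K] [Field L] [Algebra K L] [FiniteDimensional K L] :
    L ⊗[K] L →ₗ[K] ((L ≃ₐ[K] L) →₀ L) :=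
  ∑ σ : L ≃ₐ[K] L, (Finsupp.lsingle σ).comp (phiAux K L σ)

/-- `φ(β)` lies in `K[G] ⊆ L[G]`, i.e. all its coefficients are in `K`. -/
def PhiInKG (K L : Type) [Field K] [Field L] [Algebra K L] [FiniteDimensional K L]
    (β : L ⊗[K] L) : Prop :=
  ∀ σ : L ≃ₐ[K] L, ∃ k : K, phi K L β σ = algebraMap K L k

/-- `𝒯` is the set of Teichmüller representatives of `K`: a multiplicatively
closed set of representatives for the residue field. -/
def IsTeichmuller (K L : Type) [Field K] [Field L] [Algebra K L]
    (vL : L → WithTop ℤ) (𝒯 : Set K) : Prop :=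
  (0 : K) ∈ 𝒯 ∧
  (∀ x ∈ 𝒯, x ≠ 0 → vL (algebraMap K L x) = 0) ∧
  (∀ t₁ ∈ 𝒯, ∀ t₂ ∈ 𝒯, t₁ * t₂ ∈ 𝒯) ∧
  (∀ x : K, (0 : WithTop ℤ) ≤ vL (algebraMap K L x) →
    ∃! t : K, t ∈ 𝒯 ∧ (0 : WithTop ℤ) < vL (algebraMap K L (x - t)))

/-- The partial order on `(ℤ × ℤ)/H`, `H = ⟨(p^n, -p^n)⟩`, expressed on
representatives: `[q] ≤ [q']` iff some representative of `[q']` dominates `q`. -/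
def cosetLE (p n : ℕ) (q q' : ℤ × ℤ) : Prop :=
  ∃ k : ℤ, q.1 ≤ q'.1 + k * (p : ℤ) ^ n ∧ q.2 ≤ q'.2 - k * (p : ℤ) ^ n

/-- Equality of cosets modulo `H = ⟨(p^n, -p^n)⟩`. -/
def cosetEq (p n : ℕ) (q q' : ℤ × ℤ) : Prop :=
  ∃ k : ℤ, q'.1 = q.1 + k * (p : ℤ) ^ n ∧ q'.2 = q.2 - k * (p : ℤ) ^ n

/-- `A : ℤ → ℕ → K` records the coefficients of the expansion
`β = Σ_{(i,j) ∈ ℱ} A i j · π_L^i ⊗ π_L^j` with Teichmüller coefficients: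
writing `β = Σ_{0 ≤ j < p^n} c_j ⊗ π_L^j`, each `c_j` is the convergent sum
`Σ_i A i j π_L^i` (partial sums up to `m` approximate `c_j` within `M_L^{m+1}`). -/
def IsExpansion (p n : ℕ) (K L : Type) [Field K] [Field L] [Algebra K L]
    (vL : L → WithTop ℤ) (𝒯 : Set K) (πL : L) (β : L ⊗[K] L) (A : ℤ → ℕ → K) : Prop :=
  (∀ (i : ℤ) (j : ℕ), A i j ∈ 𝒯) ∧
  ∃ N : ℕ → ℤ, ∃ c : ℕ → L,
    (∀ (j : ℕ) (i : ℤ), i < N j → A i j = 0) ∧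
    β = ∑ j ∈ Finset.range (p ^ n), c j ⊗ₜ[K] (πL ^ j) ∧
    (∀ j : ℕ, j < p ^ n → ∀ m : ℤ,
      (m : WithTop ℤ) <
        vL (c j - ∑ i ∈ Finset.Icc (N j) m, algebraMap K L (A i j) * πL ^ (i : ℤ)))

/-- `R(β)`: the classes `[i,j]`, `(i,j) ∈ ℱ`, with `a_{ij} ≠ 0`. -/
def Rset (p n : ℕ) {K : Type} [Field K] (A : ℤ → ℕ → K) : Set (ℤ × ℤ) :=
  {q | ∃ (i : ℤ) (j : ℕ), j < p ^ n ∧ A i j ≠ 0 ∧ q = (i, (j : ℤ))}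

/-- `D(β)`: the diagram of `β` (upward closure of `R(β)`). -/
def Dset (p n : ℕ) {K : Type} [Field K] (A : ℤ → ℕ → K) : Set (ℤ × ℤ) :=
  {q | ∃ r ∈ Rset p n A, cosetLE p n r q}

/-- `G(β)`: the minimal elements of `D(β)`. -/
def Gset (p n : ℕ) {K : Type} [Field K] (A : ℤ → ℕ → K) : Set (ℤ × ℤ) :=
  {q | q ∈ Dset p n A ∧ ∀ q' ∈ Dset p n A, cosetLE p n q' q → cosetLE p n q q'}

/-- `dval = d(β) = min {i + j : [i,j] ∈ D(β)}`. -/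
def IsDval (p n : ℕ) {K : Type} [Field K] (A : ℤ → ℕ → K) (dval : ℤ) : Prop :=
  IsLeast {v : ℤ | ∃ q ∈ Dset p n A, q.1 + q.2 = v} dval

/-- `N(β)`: the diagonal of `β`. -/
def Nset (p n : ℕ) {K : Type} [Field K] (A : ℤ → ℕ → K) (dval : ℤ) : Set (ℤ × ℤ) :=
  {q | q ∈ Dset p n A ∧ q.1 + q.2 = dval}

/-- `|N(β)| = 2` (as a set of cosets mod `H`). -/
def NTwoCosets (p n : ℕ) {K : Type} [Field K] (A : ℤ → ℕ → K) (dval : ℤ) : Prop :=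
  ∃ q₁ ∈ Nset p n A dval, ∃ q₂ ∈ Nset p n A dval, ¬ cosetEq p n q₁ q₂ ∧
    ∀ q ∈ Nset p n A dval, cosetEq p n q q₁ ∨ cosetEq p n q q₂

/-- `L/K` is semistable: there is `β ∈ L ⊗_K L` with `φ(β) ∈ K[G]`,
`p ∤ d(β)` and `|N(β)| = 2`. -/
def Semistable (p n : ℕ) (K L : Type) [Field K] [Field L] [Algebra K L]
    [FiniteDimensional K L] (vL : L → WithTop ℤ) (𝒯 : Set K) (πL : L) : Prop :=
  ∃ (β : L ⊗[K] L) (A : ℤ → ℕ → K) (dval : ℤ),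
    IsExpansion p n K L vL 𝒯 πL β A ∧ PhiInKG K L β ∧
    IsDval p n A dval ∧ ¬ ((p : ℤ) ∣ dval) ∧ NTwoCosets p n A dval

/-- `L/K` is semistable with precision `c`. -/
def SemistableWithPrec (p n : ℕ) (K L : Type) [Field K] [Field L] [Algebra K L]
    [FiniteDimensional K L] (vL : L → WithTop ℤ) (𝒯 : Set K) (πL : L) (c : ℕ) : Prop :=
  ∃ (β : L ⊗[K] L) (A : ℤ → ℕ → K) (dval : ℤ),
    IsExpansion p n K L vL 𝒯 πL β A ∧ PhiInKG K L β ∧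
    IsDval p n A dval ∧ ¬ ((p : ℤ) ∣ dval) ∧ NTwoCosets p n A dval ∧
    ∀ q ∈ Gset p n A, q ∉ Nset p n A dval → dval + c ≤ q.1 + q.2

/-- `L/K` is stable: semistable with `β` chosen so that `G(β) = N(β)`. -/
def Stable (p n : ℕ) (K L : Type) [Field K] [Field L] [Algebra K L]
    [FiniteDimensional K L] (vL : L → WithTop ℤ) (𝒯 : Set K) (πL : L) : Prop :=
  ∃ (β : L ⊗[K] L) (A : ℤ → ℕ → K) (dval : ℤ),
    IsExpansion p n K L vL 𝒯 πL β A ∧ PhiInKG K L β ∧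
    IsDval p n A dval ∧ ¬ ((p : ℤ) ∣ dval) ∧ NTwoCosets p n A dval ∧
    Gset p n A = Nset p n A dval

/-- `d` is the valuation of the different of `L/K`: the largest `d` such that
every `x` with `v_L(x) ≥ -d` has trace in `O_K`. -/
def IsDifferentExp (K L : Type) [Field K] [Field L] [Algebra K L]
    [FiniteDimensional K L] (vL : L → WithTop ℤ) (d : ℤ) : Prop :=
  IsGreatest {m : ℤ | ∀ x : L, ((-m : ℤ) : WithTop ℤ) ≤ vL x →
    (0 : WithTop ℤ) ≤ vL (algebraMap K L (Algebra.trace K L x))} d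

end

section Helpers

lemma wt_add_one_le {a b : WithTop ℤ} (h : a < b) : a + 1 ≤ b := by
  cases a with
  | top => exact absurd h (by simp)
  | coe s =>
    cases b with
    | top => exact le_top
    | coe t =>
      have hst : s < t := WithTop.coe_lt_coe.mp h
      rw [← WithTop.coe_one, ← WithTop.coe_add, WithTop.coe_le_coe]
      omega

lemma wt_lt_add_one {a : WithTop ℤ} (ha : a ≠ ⊤) : a < a + 1 := by
  cases a with
  | top => exact absurd rfl ha
  | coe s =>
    rw [← WithTop.coe_one, ← WithTop.coe_add, WithTop.coe_lt_coe]
    omega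

variable {L : Type} [Field L] {vL : L → WithTop ℤ}

lemma vsum_ge (hv0 : vL 0 = ⊤) (hvadd : ∀ x y : L, min (vL x) (vL y) ≤ vL (x + y))
    {ι : Type*} (s : Finset ι) (f : ι → L) (b : WithTop ℤ)
    (h : ∀ i ∈ s, b ≤ vL (f i)) : b ≤ vL (∑ i ∈ s, f i) := by
  classical
  induction s using Finset.induction with
  | empty => simp [hv0]
  | @insert a s ha ih =>
    rw [Finset.sum_insert ha]
    refine le_trans (le_min (h _ (Finset.mem_insert_self _ _))
      (ih fun i hi => h i (Finset.mem_insert_of_mem hi))) (hvadd _ _)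

lemma vadd_of_lt (hvneg : ∀ x : L, vL (-x) = vL x)
    (hvadd : ∀ x y : L, min (vL x) (vL y) ≤ vL (x + y))
    {x y : L} (h : vL x < vL y) : vL (x + y) = vL x := by
  refine le_antisymm ?_ ((min_eq_left h.le) ▸ hvadd x y)
  by_contra hc
  push_neg at hc
  have h2 := hvadd (x + y) (-y)
  rw [hvneg, add_neg_cancel_right] at h2
  exact absurd h2 (not_le.mpr (lt_min hc h))

lemma vsum_eq (hv0 : vL 0 = ⊤) (hvneg : ∀ x : L, vL (-x) = vL x)
    (hvadd : ∀ x y : L, min (vL x) (vL y) ≤ vL (x + y))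
    {ι : Type*} (s : Finset ι) (f : ι → L) (i₀ : ι) (hi₀ : i₀ ∈ s)
    (hmin : ∀ j ∈ s, j ≠ i₀ → vL (f i₀) < vL (f j)) :
    vL (∑ i ∈ s, f i) = vL (f i₀) := by
  classical
  rw [← Finset.add_sum_erase s f hi₀]
  rcases eq_or_ne (s.erase i₀) ∅ with he | he
  · simp [he]
  · obtain ⟨j, hj⟩ := Finset.nonempty_iff_ne_empty.mpr he
    have htop : vL (f i₀) ≠ ⊤ :=
      ne_top_of_lt (hmin j (Finset.mem_of_mem_erase hj) (Finset.ne_of_mem_erase hj))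
    have hrest : vL (f i₀) + 1 ≤ vL (∑ i ∈ s.erase i₀, f i) :=
      vsum_ge hv0 hvadd _ _ _ (fun i hi =>
        wt_add_one_le (hmin i (Finset.mem_of_mem_erase hi) (Finset.ne_of_mem_erase hi)))
    exact vadd_of_lt hvneg hvadd (lt_of_lt_of_le (wt_lt_add_one htop) hrest)

lemma v_pow (hvmul : ∀ x y : L, vL (x * y) = vL x + vL y) (hv1 : vL 1 = 0)
    {x : L} {s : ℤ} (hx : vL x = (s : WithTop ℤ)) (N : ℕ) :
    vL (x ^ N) = ((N * s : ℤ) : WithTop ℤ) := by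
  induction N with
  | zero => simpa using hv1
  | succ k ih =>
    rw [pow_succ, hvmul, ih, hx, ← WithTop.coe_add]
    congr 1
    push_cast
    ring

end Helpers

section ActK

variable (K L : Type) [Field K] [Field L] [Algebra K L]

lemma actK_apply (ξ : MonoidAlgebra K (L ≃ₐ[K] L)) (y : L) :
    actK K L ξ y = ∑ σ ∈ ξ.coeff.support, algebraMap K L (ξ.coeff σ) * σ y := rfl

lemma actK_add (ξ : MonoidAlgebra K (L ≃ₐ[K] L)) (x y : L) :
    actK K L ξ (x + y) = actK K L ξ x + actK K L ξ y := by
  rw [actK_apply, actK_apply, actK_apply, ← Finset.sum_add_distrib]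
  exact Finset.sum_congr rfl fun σ _ => by rw [map_add, mul_add]

lemma actK_smul (ξ : MonoidAlgebra K (L ≃ₐ[K] L)) (k : K) (y : L) :
    actK K L ξ (algebraMap K L k * y) = algebraMap K L k * actK K L ξ y := by
  rw [actK_apply, actK_apply, Finset.mul_sum]
  exact Finset.sum_congr rfl fun σ _ => by rw [map_mul, AlgEquiv.commutes]; ring

lemma actK_zero (ξ : MonoidAlgebra K (L ≃ₐ[K] L)) : actK K L ξ 0 = 0 := by
  rw [actK_apply]
  exact Finset.sum_eq_zero fun σ _ => by rw [map_zero, mul_zero]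

end ActK

/-- Well-definedness and basic properties of f_ξ. -/
theorem stmt_17 (p n : ℕ) (hp : p.Prime) (hn : 1 ≤ n)
    (K L : Type) [Field K] [Field L] [Algebra K L] [IsGalois K L] [FiniteDimensional K L]
    (hdeg : Nat.card (L ≃ₐ[K] L) = p ^ n)
    (vL : L → WithTop ℤ) (hctx : LocalCtx p n K L vL)
    (ξ : MonoidAlgebra K (L ≃ₐ[K] L)) (hξ : ξ ≠ 0) :
    ∃ fξ : ℤ → ℤ,
      (∀ m : ℤ, IsLeast
        {v : WithTop ℤ | ∃ y : L, (m : WithTop ℤ) ≤ vL y ∧ vL (actK K L ξ y) = v}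
        ((fξ m : ℤ) : WithTop ℤ)) ∧
      (∀ m : ℤ, fξ m ≤ fξ (m + 1)) ∧
      (∀ m : ℤ, ∃ z : L, vL z = (m : WithTop ℤ) ∧
        vL (actK K L ξ z) = ((fξ m : ℤ) : WithTop ℤ)) := by
    classical
  obtain ⟨⟨hv0, hvne, hvmul, hvadd, hvsurj⟩, hgal, hKval, -, -⟩ := hctx
  have haKinj : Function.Injective (algebraMap K L) := (algebraMap K L).injective
  have haKne : ∀ k : K, k ≠ 0 → algebraMap K L k ≠ 0 := fun k hk h =>
    hk (haKinj (by rw [h, map_zero]))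
  -- basic valuation facts
  have hv1 : vL 1 = 0 := by
    obtain ⟨t, ht⟩ := WithTop.ne_top_iff_exists.mp (hvne 1 one_ne_zero)
    have h := hvmul 1 1
    rw [one_mul, ← ht, ← WithTop.coe_add, WithTop.coe_eq_coe] at h
    have ht0 : t = 0 := by omega
    rw [← ht, ht0, WithTop.coe_zero]
  have hvm1 : vL (-1 : L) = 0 := by
    obtain ⟨t, ht⟩ := WithTop.ne_top_iff_exists.mp (hvne (-1) (by norm_num))
    have h := hvmul (-1) (-1)
    rw [neg_mul_neg, one_mul, hv1, ← ht, ← WithTop.coe_add, ← WithTop.coe_zero,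
      WithTop.coe_eq_coe] at h
    have ht0 : t = 0 := by omega
    rw [← ht, ht0, WithTop.coe_zero]
  have hvneg : ∀ x : L, vL (-x) = vL x := fun x => by
    have h : -x = (-1 : L) * x := by ring
    rw [h, hvmul, hvm1, zero_add]
  -- Part A : the operator is nonzero
  have hA : ∃ y : L, actK K L ξ y ≠ 0 := by
    by_contra hall
    push_neg at hall
    obtain ⟨σ₀, hσ₀⟩ := Finsupp.support_nonempty_iff.mpr (mt MonoidAlgebra.coeff_eq_zero.mp hξ)
    set emb : (L ≃ₐ[K] L) → (L →* L) := fun σ => ⟨⟨⇑σ, map_one σ⟩, map_mul σ⟩ with hemb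
    have hinj : Function.Injective emb := fun σ τ h =>
      AlgEquiv.ext fun x => DFunLike.congr_fun h x
    have hli : LinearIndependent L (fun σ : L ≃ₐ[K] L => ((emb σ) : L → L)) :=
      (linearIndependent_monoidHom L L).comp emb hinj
    have hz := Fintype.linearIndependent_iff.mp hli (fun σ => algebraMap K L (ξ.coeff σ)) ?_ σ₀
    · exact (Finsupp.mem_support_iff.mp hσ₀) (haKinj (by rw [hz, map_zero]))
    · funext y
      simp only [Finset.sum_apply, Pi.smul_apply, smul_eq_mul, Pi.zero_apply]
      have h1 : actK K L ξ y = ∑ σ, algebraMap K L (ξ.coeff σ) * σ y :=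
        Finsupp.sum_fintype _ _ (fun σ => by simp)
      have h2 : ∀ σ : L ≃ₐ[K] L, (emb σ) y = σ y := fun σ => rfl
      simp only [h2]
      rw [← h1]
      exact hall y
  -- Part B : K has elements of arbitrarily large valuation
  have hB : ∃ (k : K) (m : ℤ), k ≠ 0 ∧ 1 ≤ m ∧
      vL (algebraMap K L k) = ((p ^ n * m : ℤ) : WithTop ℤ) := by
    have hne : ∃ k : K, k ≠ 0 ∧ vL (algebraMap K L k) ≠ 0 := by
      by_contra hall
      push_neg at hall
      set d := Module.finrank K L with hd
      have hx : ∀ i : Fin (d + 1), ∃ x : L, vL x = ((i : ℤ) : WithTop ℤ) :=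
        fun i => hvsurj (i : ℤ)
      choose x hxv using hx
      have hdep : ¬ LinearIndependent K x := fun h => by
        have hcard := h.fintype_card_le_finrank
        rw [Fintype.card_fin] at hcard
        omega
      obtain ⟨g, hg0, i₁, hi₁⟩ := Fintype.not_linearIndependent_iff.mp hdep
      set s : Finset (Fin (d + 1)) := Finset.univ.filter (fun i => g i ≠ 0) with hs
      have hi₁s : i₁ ∈ s := by simp [hs, hi₁]
      set i₀ := s.min' ⟨i₁, hi₁s⟩ with hi₀
      have hi₀s : i₀ ∈ s := s.min'_mem _
      have hval : ∀ i ∈ s, vL (g i • x i) = ((i : ℤ) : WithTop ℤ) := fun i hi => by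
        rw [Algebra.smul_def, hvmul, hall _ (Finset.mem_filter.mp hi).2, hxv, zero_add]
      have hmin : ∀ j ∈ Finset.univ, j ≠ i₀ → vL (g i₀ • x i₀) < vL (g j • x j) := by
        intro j _ hj
        rw [hval i₀ hi₀s]
        by_cases hgj : g j = 0
        · rw [hgj, zero_smul, hv0]
          exact WithTop.coe_lt_top _
        · have hjs : j ∈ s := by simp [hs, hgj]
          rw [hval j hjs, WithTop.coe_lt_coe]
          have h1 : i₀ ≤ j := s.min'_le j hjs
          have h2 : i₀ < j := lt_of_le_of_ne h1 (fun e => hj e.symm)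
          exact_mod_cast h2
      have hv := vsum_eq hv0 hvneg hvadd Finset.univ (fun i => g i • x i) i₀ (Finset.mem_univ _) hmin
      rw [hg0, hv0, hval i₀ hi₀s] at hv
      exact WithTop.top_ne_coe hv
    obtain ⟨k, hk0, hkv⟩ := hne
    obtain ⟨m, hm⟩ := hKval k hk0
    have hm0 : m ≠ 0 := by
      rintro rfl
      rw [mul_zero, WithTop.coe_zero] at hm
      exact hkv hm
    rcases hm0.lt_or_gt with hneg | hpos
    · refine ⟨k⁻¹, -m, inv_ne_zero hk0, by omega, ?_⟩
      have h1 : vL (algebraMap K L k * algebraMap K L k⁻¹) = 0 := by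
        rw [← map_mul, mul_inv_cancel₀ hk0, map_one, hv1]
      obtain ⟨t, ht⟩ := WithTop.ne_top_iff_exists.mp (hvne _ (haKne k⁻¹ (inv_ne_zero hk0)))
      rw [hvmul, hm, ← ht, ← WithTop.coe_add, ← WithTop.coe_zero, WithTop.coe_eq_coe] at h1
      rw [← ht, WithTop.coe_eq_coe]
      linarith
    · exact ⟨k, m, hk0, hpos, hm⟩
  -- uniform lower bound
  have hbound : ∃ c : ℤ, ∀ y : L, (c : WithTop ℤ) + vL y ≤ vL (actK K L ξ y) := by
    obtain ⟨σ₀, hσ₀⟩ := Finsupp.support_nonempty_iff.mpr (mt MonoidAlgebra.coeff_eq_zero.mp hξ)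
    set Cw := ξ.coeff.support.inf (fun σ => vL (algebraMap K L (ξ.coeff σ))) with hCw
    have hCt : Cw ≠ ⊤ :=
      ne_top_of_le_ne_top (hvne _ (haKne _ (Finsupp.mem_support_iff.mp hσ₀)))
        (Finset.inf_le hσ₀)
    obtain ⟨c, hc⟩ := WithTop.ne_top_iff_exists.mp hCt
    refine ⟨c, fun y => ?_⟩
    rw [hc, actK_apply]
    refine vsum_ge hv0 hvadd _ _ _ (fun σ hσ => ?_)
    rw [hvmul, hgal σ y]
    exact add_le_add (Finset.inf_le hσ) le_rfl
  obtain ⟨y₀, hy₀⟩ := hA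
  obtain ⟨k₀, m₀, hk₀0, hm₀1, hk₀v⟩ := hB
  obtain ⟨c, hc⟩ := hbound
  have hy₀0 : y₀ ≠ 0 := by
    rintro rfl
    exact hy₀ (actK_zero K L ξ)
  obtain ⟨t₀, ht₀⟩ := WithTop.ne_top_iff_exists.mp (hvne y₀ hy₀0)
  obtain ⟨e₀, he₀⟩ := WithTop.ne_top_iff_exists.mp (hvne _ hy₀)
  have hP1 : (1 : ℤ) ≤ (p : ℤ) ^ n * m₀ := by
    have hp1 : (1 : ℤ) ≤ (p : ℤ) ^ n := by
      calc (1 : ℤ) = 1 ^ n := (one_pow n).symm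
        _ ≤ (p : ℤ) ^ n := pow_le_pow_left₀ one_pos.le (by exact_mod_cast hp.one_lt.le) n
    nlinarith
  have key : ∀ m : ℤ, ∃ lb : ℤ,
      (∃ y : L, (m : WithTop ℤ) ≤ vL y ∧ vL (actK K L ξ y) = (lb : WithTop ℤ)) ∧
      ∀ z : ℤ, (∃ y : L, (m : WithTop ℤ) ≤ vL y ∧ vL (actK K L ξ y) = (z : WithTop ℤ)) →
        lb ≤ z := by
    intro m
    apply Int.exists_least_of_bdd
    · refine ⟨c + m, ?_⟩
      rintro z ⟨y, hy, hzy⟩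
      have h2 : ((c : WithTop ℤ) + (m : WithTop ℤ)) ≤ (z : WithTop ℤ) := by
        rw [← hzy]
        exact le_trans (add_le_add le_rfl hy) (hc y)
      exact_mod_cast h2
    · set N : ℕ := (m - t₀).toNat with hN
      have hpow : vL ((algebraMap K L k₀) ^ N) =
          (((N : ℤ) * ((p : ℤ) ^ n * m₀) : ℤ) : WithTop ℤ) := by
        exact v_pow hvmul hv1 hk₀v N
      have hNge : m - t₀ ≤ (N : ℤ) := Int.self_le_toNat _
      have hNbig : m ≤ (N : ℤ) * ((p : ℤ) ^ n * m₀) + t₀ := by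
        have h1 : (N : ℤ) ≤ (N : ℤ) * ((p : ℤ) ^ n * m₀) :=
          le_mul_of_one_le_right (Int.ofNat_nonneg N) hP1
        omega
      refine ⟨(N : ℤ) * ((p : ℤ) ^ n * m₀) + e₀, algebraMap K L (k₀ ^ N) * y₀, ?_, ?_⟩
      · rw [hvmul, map_pow, hpow, ← ht₀, ← WithTop.coe_add, WithTop.coe_le_coe]
        exact hNbig
      · rw [actK_smul, map_pow, hvmul, hpow, ← he₀, ← WithTop.coe_add]
  choose fξ hmem hlb using key
  have hge : ∀ (m : ℤ) (w : L), (m : WithTop ℤ) ≤ vL w →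
      ((fξ m : ℤ) : WithTop ℤ) ≤ vL (actK K L ξ w) := by
    intro m w hw
    by_cases htop : vL (actK K L ξ w) = ⊤
    · rw [htop]; exact le_top
    · obtain ⟨t, ht⟩ := WithTop.ne_top_iff_exists.mp htop
      rw [← ht]
      exact WithTop.coe_le_coe.mpr (hlb m t ⟨w, hw, ht.symm⟩)
  refine ⟨fξ, fun m => ⟨hmem m, ?_⟩, fun m => ?_, fun m => ?_⟩
  · rintro v ⟨y, hy, rfl⟩
    exact hge m y hy
  · obtain ⟨y, hy, hv⟩ := hmem (m + 1)
    have hmy : (m : WithTop ℤ) ≤ vL y :=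
      le_trans (WithTop.coe_le_coe.mpr (by omega)) hy
    exact hlb m _ ⟨y, hmy, hv⟩
  · obtain ⟨y, hy, hvy⟩ := hmem m
    obtain ⟨x, hx⟩ := hvsurj m
    have hxm : (m : WithTop ℤ) ≤ vL x := hx.symm.le
    rcases eq_or_lt_of_le (hge m x hxm) with heq | hlt
    · exact ⟨x, hx, heq.symm⟩
    · have hvw : vL (actK K L ξ (x + y)) = ((fξ m : ℤ) : WithTop ℤ) := by
        rw [actK_add, add_comm (actK K L ξ x),
          vadd_of_lt hvneg hvadd (by rw [hvy]; exact hlt), hvy]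
      have hwge : (m : WithTop ℤ) ≤ vL (x + y) := le_trans (le_min hxm hy) (hvadd x y)
      rcases eq_or_lt_of_le hwge with heqw | hltw
      · exact ⟨x + y, heqw.symm, hvw⟩
      · refine ⟨x + (x + y), ?_, ?_⟩
        · rw [vadd_of_lt hvneg hvadd (by rw [hx]; exact hltw), hx]
        · rw [actK_add, add_comm (actK K L ξ x),
            vadd_of_lt hvneg hvadd (by rw [hvw]; exact hlt), hvw]
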